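/- Let L ⊂ ℂ be an integer-normed lattice (the ℤ-span of two elements linearly independent over ℝ, with |z|² ∈ ℤ for every z ∈ L) and suppose 1 ∈ L. Then L is closed under multiplication and under complex conjugation: for all z, w ∈ L one has z·w ∈ L and conj(z) ∈ L; consequently L is stable under all four operations σ₁(z,w) = z·w, σ₂(z,w) = conj(z)·w, σ₃(z,w) = z·conj(w), σ₄(z,w) = conj(z·w). -/

import Mathlib

/-- An integer-normed lattice in `ℂ` containing 1 is closed under multiplication
and complex conjugation; consequently it is stable under all four operations
`σ₁(z,w) = zw`, `σ₂(z,w) = z̄w`, `σ₃(z,w) = zw̄`, `σ₄(z,w) = conj(zw)`. -/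
theorem stmt19 (e₁ e₂ : ℂ) (hli : LinearIndependent ℝ ![e₁, e₂])
    (L : Set ℂ) (hL : L = {z : ℂ | ∃ a b : ℤ, z = (a : ℂ) * e₁ + (b : ℂ) * e₂})
    (hnormed : ∀ z ∈ L, ∃ nz : ℤ, Complex.normSq z = (nz : ℝ))
    (hone : (1 : ℂ) ∈ L) :
    (∀ z ∈ L, ∀ w ∈ L, z * w ∈ L) ∧
    (∀ z ∈ L, (starRingEnd ℂ) z ∈ L) ∧
    (∀ z ∈ L, ∀ w ∈ L, (starRingEnd ℂ) z * w ∈ L) ∧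
    (∀ z ∈ L, ∀ w ∈ L, z * (starRingEnd ℂ) w ∈ L) ∧
    (∀ z ∈ L, ∀ w ∈ L, (starRingEnd ℂ) (z * w) ∈ L) := by
  have hmem : ∀ a b : ℤ, (a : ℂ) * e₁ + (b : ℂ) * e₂ ∈ L := by
    intro a b; rw [hL]; exact ⟨a, b, rfl⟩
  obtain ⟨p, q, hpq⟩ : ∃ p q : ℤ, (1 : ℂ) = (p : ℂ) * e₁ + (q : ℂ) * e₂ := by
    rw [hL] at hone; exact hone
  -- p and q are coprime
  have hcop : IsCoprime p q := by
    rw [Int.isCoprime_iff_gcd_eq_one]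
    set d : ℕ := Int.gcd p q with hd
    obtain ⟨p', hp'⟩ : (d : ℤ) ∣ p := Int.gcd_dvd_left p q
    obtain ⟨q', hq'⟩ : (d : ℤ) ∣ q := Int.gcd_dvd_right p q
    have hv : (p' : ℂ) * e₁ + (q' : ℂ) * e₂ ∈ L := hmem p' q'
    obtain ⟨m, hm⟩ := hnormed _ hv
    have h1 : (1 : ℂ) = (d : ℂ) * ((p' : ℂ) * e₁ + (q' : ℂ) * e₂) := by
      rw [hpq, hp', hq']; push_cast; ring
    have h2 : (1 : ℝ) = (d : ℝ)^2 * (m : ℝ) := by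
      have := congrArg Complex.normSq h1
      rw [Complex.normSq_mul, hm] at this
      simpa [Complex.normSq_one, Complex.normSq_natCast, sq] using this
    have h3 : (1 : ℤ) = (d : ℤ)^2 * m := by exact_mod_cast h2
    have hdvd : (d : ℤ) ∣ 1 := ⟨(d : ℤ) * m, by linarith [h3]⟩
    have := Int.eq_one_of_dvd_one (by positivity) hdvd
    exact_mod_cast this
  obtain ⟨u, v, huv⟩ := hcop
  set τ : ℂ := (-v : ℤ) * e₁ + (u : ℤ) * e₂ with hτ
  have huvC : ((u * p + v * q : ℤ) : ℂ) = 1 := by rw [huv]; norm_num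
  push_cast at huvC
  -- representation: every element of L is a + b τ
  have hrep : ∀ z ∈ L, ∃ a b : ℤ, z = (a : ℂ) + (b : ℂ) * τ := by
    intro z hz
    rw [hL] at hz
    obtain ⟨a, b, hab⟩ := hz
    refine ⟨a * u + b * v, -a * q + b * p, ?_⟩
    rw [hab, hτ]
    push_cast
    linear_combination (-(a * u + b * v) : ℂ) * hpq - (a * e₁ + b * e₂) * huvC
  have hmemτ : ∀ a b : ℤ, (a : ℂ) + (b : ℂ) * τ ∈ L := by
    intro a b
    have := hmem (a * p - b * v) (a * q + b * u)
    have heq : ((a * p - b * v : ℤ) : ℂ) * e₁ + ((a * q + b * u : ℤ) : ℂ) * e₂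
        = (a : ℂ) + (b : ℂ) * τ := by
      rw [hτ]; push_cast; linear_combination (-a : ℂ) * hpq
    rwa [heq] at this
  have hτL : τ ∈ L := by have := hmemτ 0 1; simpa using this
  -- τ satisfies a monic integer quadratic
  obtain ⟨n, hn⟩ := hnormed τ hτL
  obtain ⟨n₁, hn₁⟩ := hnormed (1 + τ) (by have := hmemτ 1 1; simpa using this)
  have hnC : τ * (starRingEnd ℂ) τ = (n : ℂ) := by
    rw [Complex.mul_conj, hn]; norm_num
  have hn₁C : (1 + τ) * (starRingEnd ℂ) (1 + τ) = (n₁ : ℂ) := by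
    rw [Complex.mul_conj, hn₁]; norm_num
  set t : ℤ := n₁ - 1 - n with ht
  have hconjτ : (starRingEnd ℂ) τ = (t : ℂ) - τ := by
    have hx : (starRingEnd ℂ) (1 + τ) = 1 + (starRingEnd ℂ) τ := by
      rw [map_add, map_one]
    rw [hx] at hn₁C
    push_cast [ht]
    linear_combination hn₁C - hnC
  have hτsq : τ ^ 2 = (t : ℂ) * τ - (n : ℂ) := by
    have := hnC
    rw [hconjτ] at this
    linear_combination -this
  -- conjugation closure
  have hconj : ∀ z ∈ L, (starRingEnd ℂ) z ∈ L := by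
    intro z hz
    obtain ⟨a, b, hab⟩ := hrep z hz
    have : (starRingEnd ℂ) z = ((a + b * t : ℤ) : ℂ) + ((-b : ℤ) : ℂ) * τ := by
      rw [hab, map_add, map_mul, map_intCast, map_intCast, hconjτ]
      push_cast; ring
    rw [this]; exact hmemτ _ _
  -- multiplication closure
  have hmul : ∀ z ∈ L, ∀ w ∈ L, z * w ∈ L := by
    intro z hz w hw
    obtain ⟨a, b, hab⟩ := hrep z hz
    obtain ⟨c, d, hcd⟩ := hrep w hw
    have : z * w = ((a * c - b * d * n : ℤ) : ℂ)
        + ((a * d + b * c + b * d * t : ℤ) : ℂ) * τ := by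
      rw [hab, hcd]
      push_cast
      linear_combination (b : ℂ) * d * hτsq
    rw [this]; exact hmemτ _ _
  exact ⟨hmul, hconj,
    fun z hz w hw => hmul _ (hconj z hz) _ hw,
    fun z hz w hw => hmul _ hz _ (hconj w hw),
    fun z hz w hw => hconj _ (hmul z hz w hw)⟩
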